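/- For k ∈ ℕ (k ≥ 0), let φ_k(x) = (k! 2^k √π)^{−1/2} e^{−x²/2} H_k(x) be the k-th Hermite function. Let a, b, c ∈ ℝ with a < 0 and suppose that √(1−a) and b are algebraically independent over ℚ. Then for all j, k ≥ 0 with j ≡ k (mod 2), ∫_ℝ e^{a x² + b x + c} φ_j(x) φ_k(x) dx ≠ 0. -/

import Mathlib

open MeasureTheory Real Polynomial

/-! ### Physicists' Hermite polynomials with rational coefficients -/

noncomputable def physHermite : ℕ → Polynomial ℚ
  | 0 => 1
  | n + 1 => C 2 * X * physHermite n - derivative (physHermite n)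

lemma iteratedDeriv_gaussian (n : ℕ) (x : ℝ) :
    iteratedDeriv n (fun y => Real.exp (-y ^ 2)) x =
      (-1 : ℝ) ^ n * (aeval x (physHermite n) * Real.exp (-x ^ 2)) := by
  induction' n with n ih generalizing x
  · simp [physHermite]
  · replace ih : iteratedDeriv n _ = _ := funext ih
    have deriv_gaussian : ∀ y : ℝ,
        deriv (fun y : ℝ => Real.exp (-y ^ 2)) y = -2 * y * Real.exp (-y ^ 2) := by
      intro y
      rw [deriv_exp (by fun_prop)]
      simp
      ring
    rw [iteratedDeriv_succ, ih, deriv_const_mul_field, deriv_fun_mul, deriv_gaussian,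
      physHermite, map_sub, map_mul, map_mul, aeval_X, Polynomial.deriv_aeval, pow_succ]
    · simp only [aeval_C, map_ofNat]
      ring
    · apply Polynomial.differentiable_aeval
    · apply DifferentiableAt.exp
      fun_prop

lemma physHermite_natDegree_le (n : ℕ) : (physHermite n).natDegree ≤ n := by
  induction' n with n ih
  · simp [physHermite]
  · rw [physHermite]
    refine (natDegree_sub_le _ _).trans (max_le ?_ ?_)
    · refine (natDegree_mul_le).trans ?_
      have : (C (2:ℚ) * X).natDegree ≤ 1 := (natDegree_mul_le).trans (by simp)
      omega
    · exact (natDegree_derivative_le _).trans (by omega)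

lemma physHermite_coeff_top (n : ℕ) : (physHermite n).coeff n = 2 ^ n := by
  induction' n with n ih
  · simp [physHermite]
  · rw [physHermite, coeff_sub, mul_assoc, coeff_C_mul, coeff_X_mul, ih, coeff_derivative,
      coeff_eq_zero_of_natDegree_lt (lt_of_le_of_lt (physHermite_natDegree_le n) (by omega))]
    ring

lemma physHermite_natDegree (n : ℕ) : (physHermite n).natDegree = n :=
  le_antisymm (physHermite_natDegree_le n)
    (le_natDegree_of_ne_zero (by rw [physHermite_coeff_top]; positivity))

lemma physHermite_mul_coeff_top (j k : ℕ) :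
    (physHermite j * physHermite k).coeff (j + k) = 2 ^ (j + k) := by
  have h := Polynomial.coeff_mul_degree_add_degree (physHermite j) (physHermite k)
  rw [physHermite_natDegree, physHermite_natDegree] at h
  rw [h, Polynomial.leadingCoeff, Polynomial.leadingCoeff, physHermite_natDegree,
    physHermite_natDegree, physHermite_coeff_top, physHermite_coeff_top, pow_add]

/-! ### Integrability and moments of `x ^ p * exp (-α x² + b x)` -/

lemma integrable_pow_mul_gauss {α : ℝ} (hα : 0 < α) (b : ℝ) (p : ℕ) :
    Integrable fun x : ℝ => x ^ p * Real.exp (-α * x ^ 2 + b * x) := by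
  have key : ∀ x : ℝ, ‖x ^ p * Real.exp (-α * x ^ 2 + b * x)‖ ≤
      (p.factorial * Real.exp ((1 + |b|) ^ 2 / (2 * α))) * Real.exp (-(α / 2) * x ^ 2) := by
    intro x
    have h1 : |x| ^ p ≤ p.factorial * Real.exp |x| := by
      have h2 : |x| ^ p / p.factorial ≤ ∑ i ∈ Finset.range (p + 1), |x| ^ i / i.factorial :=
        Finset.single_le_sum (f := fun i => |x| ^ i / i.factorial)
          (fun i _ => by positivity) (Finset.self_mem_range_succ p)
      have h3 := (h2.trans (Real.sum_le_exp_of_nonneg (abs_nonneg x) (p + 1)))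
      have hp : (0:ℝ) < p.factorial := by positivity
      calc |x| ^ p = |x| ^ p / p.factorial * p.factorial := by field_simp
        _ ≤ Real.exp |x| * p.factorial := by gcongr
        _ = p.factorial * Real.exp |x| := by ring
    have h4 : Real.exp (-α * x ^ 2 + b * x) ≤ Real.exp (-α * x ^ 2 + |b| * |x|) := by
      apply Real.exp_le_exp.2
      have : b * x ≤ |b| * |x| := (le_abs_self _).trans (abs_mul b x).le
      linarith
    have h6 : (1 + |b|) * |x| ≤ (1 + |b|) ^ 2 / (2 * α) + (α / 2) * x ^ 2 := by
      rw [div_add' _ _ _ (by positivity), le_div_iff₀ (by positivity)]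
      have hxx : α ^ 2 * |x| ^ 2 = α ^ 2 * x ^ 2 := by rw [sq_abs]
      nlinarith [sq_nonneg ((1 + |b|) - α * |x|), hxx]
    have h5 : |x| + (-α * x ^ 2 + |b| * |x|) ≤ (1 + |b|) ^ 2 / (2 * α) + -(α / 2) * x ^ 2 := by
      nlinarith [h6]
    calc ‖x ^ p * Real.exp (-α * x ^ 2 + b * x)‖
        = |x| ^ p * Real.exp (-α * x ^ 2 + b * x) := by
          rw [norm_mul, norm_pow]
          simp [abs_of_pos (Real.exp_pos _)]
      _ ≤ (p.factorial * Real.exp |x|) * Real.exp (-α * x ^ 2 + |b| * |x|) := by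
          apply mul_le_mul h1 h4 (Real.exp_pos _).le (by positivity)
      _ = p.factorial * Real.exp (|x| + (-α * x ^ 2 + |b| * |x|)) := by
          rw [mul_assoc, ← Real.exp_add]
      _ ≤ p.factorial * Real.exp ((1 + |b|) ^ 2 / (2 * α) + -(α / 2) * x ^ 2) := by
          gcongr
      _ = (p.factorial * Real.exp ((1 + |b|) ^ 2 / (2 * α))) * Real.exp (-(α / 2) * x ^ 2) := by
          rw [Real.exp_add]; ring
  refine Integrable.mono' ((integrable_exp_neg_mul_sq (by positivity : (0:ℝ) < α / 2)).const_mul _)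
    ?_ (Filter.Eventually.of_forall key)
  exact (Continuous.aestronglyMeasurable (by fun_prop))

lemma integral_exp_gauss_pos {α : ℝ} (hα : 0 < α) (b : ℝ) :
    0 < ∫ x : ℝ, x ^ 0 * Real.exp (-α * x ^ 2 + b * x) := by
  have : 0 < ∫ x : ℝ, Real.exp (-α * x ^ 2 + b * x) :=
    integral_exp_pos (by simpa using integrable_pow_mul_gauss hα b 0)
  simpa using this

lemma hasDerivAt_gaussExp (α b x : ℝ) :
    HasDerivAt (fun y : ℝ => Real.exp (-α * y ^ 2 + b * y))
      ((b - 2 * α * x) * Real.exp (-α * x ^ 2 + b * x)) x := by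
  have inner : HasDerivAt (fun y : ℝ => -α * y ^ 2 + b * y) (-α * (2 * x ^ 1) + b * 1) x := by
    have h1 : HasDerivAt (fun y : ℝ => y ^ 2) ((2 : ℕ) * x ^ 1) x := hasDerivAt_pow 2 x
    have h2 : HasDerivAt (fun y : ℝ => y) 1 x := hasDerivAt_id x
    exact ((h1.const_mul (-α)).add (h2.const_mul b)).congr_deriv (by push_cast; ring)
  exact inner.exp.congr_deriv (by ring)

lemma moment_one {α : ℝ} (hα : 0 < α) (b : ℝ) :
    b * (∫ x : ℝ, x ^ 0 * Real.exp (-α * x ^ 2 + b * x))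
      - 2 * α * (∫ x : ℝ, x ^ 1 * Real.exp (-α * x ^ 2 + b * x)) = 0 := by
  have hf : Integrable fun x : ℝ => b * (x ^ 0 * Real.exp (-α * x ^ 2 + b * x)) :=
    (integrable_pow_mul_gauss hα b 0).const_mul b
  have hg : Integrable fun x : ℝ => 2 * α * (x ^ 1 * Real.exp (-α * x ^ 2 + b * x)) :=
    (integrable_pow_mul_gauss hα b 1).const_mul (2 * α)
  have hint : Integrable fun x : ℝ => b * (x ^ 0 * Real.exp (-α * x ^ 2 + b * x))
      - 2 * α * (x ^ 1 * Real.exp (-α * x ^ 2 + b * x)) := hf.sub hg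
  have hderiv : ∀ x : ℝ, HasDerivAt (fun y : ℝ => Real.exp (-α * y ^ 2 + b * y))
      (b * (x ^ 0 * Real.exp (-α * x ^ 2 + b * x))
        - 2 * α * (x ^ 1 * Real.exp (-α * x ^ 2 + b * x))) x :=
    fun x => (hasDerivAt_gaussExp α b x).congr_deriv (by ring)
  have h0 := integral_eq_zero_of_hasDerivAt_of_integrable hderiv hint
    (by simpa using integrable_pow_mul_gauss hα b 0)
  rw [integral_sub hf hg, integral_const_mul, integral_const_mul] at h0
  linarith

lemma moment_rec {α : ℝ} (hα : 0 < α) (b : ℝ) (p : ℕ) :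
    ((p : ℝ) + 1) * (∫ x : ℝ, x ^ p * Real.exp (-α * x ^ 2 + b * x))
      + b * (∫ x : ℝ, x ^ (p + 1) * Real.exp (-α * x ^ 2 + b * x))
      - 2 * α * (∫ x : ℝ, x ^ (p + 2) * Real.exp (-α * x ^ 2 + b * x)) = 0 := by
  have hf0 : Integrable fun x : ℝ => ((p : ℝ) + 1) * (x ^ p * Real.exp (-α * x ^ 2 + b * x)) :=
    (integrable_pow_mul_gauss hα b p).const_mul _
  have hf1 : Integrable fun x : ℝ => b * (x ^ (p + 1) * Real.exp (-α * x ^ 2 + b * x)) :=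
    (integrable_pow_mul_gauss hα b (p + 1)).const_mul _
  have hf2 : Integrable fun x : ℝ => 2 * α * (x ^ (p + 2) * Real.exp (-α * x ^ 2 + b * x)) :=
    (integrable_pow_mul_gauss hα b (p + 2)).const_mul _
  have hf01 : Integrable fun x : ℝ => ((p : ℝ) + 1) * (x ^ p * Real.exp (-α * x ^ 2 + b * x))
      + b * (x ^ (p + 1) * Real.exp (-α * x ^ 2 + b * x)) := hf0.add hf1
  have hint : Integrable fun x : ℝ =>
      (((p : ℝ) + 1) * (x ^ p * Real.exp (-α * x ^ 2 + b * x))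
        + b * (x ^ (p + 1) * Real.exp (-α * x ^ 2 + b * x)))
        - 2 * α * (x ^ (p + 2) * Real.exp (-α * x ^ 2 + b * x)) := hf01.sub hf2
  have hderiv : ∀ x : ℝ, HasDerivAt (fun y : ℝ => y ^ (p + 1) * Real.exp (-α * y ^ 2 + b * y))
      ((((p : ℝ) + 1) * (x ^ p * Real.exp (-α * x ^ 2 + b * x))
        + b * (x ^ (p + 1) * Real.exp (-α * x ^ 2 + b * x)))
        - 2 * α * (x ^ (p + 2) * Real.exp (-α * x ^ 2 + b * x))) x := by
    intro x
    have := (hasDerivAt_pow (p + 1) x).mul (hasDerivAt_gaussExp α b x)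
    refine this.congr_deriv ?_
    push_cast
    ring
  have h0 := integral_eq_zero_of_hasDerivAt_of_integrable hderiv hint
    (integrable_pow_mul_gauss hα b (p + 1))
  rw [integral_sub hf01 hf2, integral_add hf0 hf1, integral_const_mul, integral_const_mul,
    integral_const_mul] at h0
  linarith

/-! ### The auxiliary two-variable polynomials -/

noncomputable def auxU : ℕ → MvPolynomial (Fin 2) ℚ
  | 0 => 1
  | 1 => MvPolynomial.X 1
  | (p + 2) => MvPolynomial.X 1 * auxU (p + 1)
      + (MvPolynomial.C (2 * (p + 1) : ℚ) * (MvPolynomial.X 0) ^ 2) * auxU p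

lemma aeval_auxU_succ_succ (s b : ℝ) (p : ℕ) :
    (MvPolynomial.aeval ![s, b]) (auxU (p + 2)) =
      b * (MvPolynomial.aeval ![s, b]) (auxU (p + 1))
        + (2 * ((p : ℝ) + 1)) * s ^ 2 * (MvPolynomial.aeval ![s, b]) (auxU p) := by
  rw [show auxU (p + 2) = MvPolynomial.X 1 * auxU (p + 1)
      + (MvPolynomial.C (2 * (p + 1) : ℚ) * (MvPolynomial.X 0) ^ 2) * auxU p from rfl]
  simp only [map_add, map_mul, map_pow, MvPolynomial.aeval_X, MvPolynomial.aeval_C,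
    Matrix.cons_val_one, Matrix.head_cons, Matrix.cons_val_zero]
  rw [eq_ratCast (algebraMap ℚ ℝ)]
  push_cast
  ring

lemma moment_formula {α : ℝ} (hα : 0 < α) (b s : ℝ) (hs : s ^ 2 = α) :
    ∀ p : ℕ, (2 * α) ^ p * (∫ x : ℝ, x ^ p * Real.exp (-α * x ^ 2 + b * x)) =
      (∫ x : ℝ, x ^ 0 * Real.exp (-α * x ^ 2 + b * x)) *
        (MvPolynomial.aeval ![s, b]) (auxU p)
  | 0 => by simp [auxU]
  | 1 => by
      have h0 := moment_one hα b
      have hA : (MvPolynomial.aeval ![s, b]) (auxU 1) = b := by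
        rw [show auxU 1 = MvPolynomial.X 1 from rfl]
        simp
      rw [hA]
      linarith [h0]
  | (p + 2) => by
      have h0 := moment_rec hα b p
      have e1 := moment_formula hα b s hs p
      have e2 := moment_formula hα b s hs (p + 1)
      rw [aeval_auxU_succ_succ, hs]
      linear_combination (-(2 * α) ^ (p + 1)) * h0 + b * e2 + ((p : ℝ) + 1) * (2 * α) * e1

lemma psi_auxU : ∀ m : ℕ,
    (MvPolynomial.aeval ![(0 : Polynomial ℚ), Polynomial.X]) (auxU m) = Polynomial.X ^ m
  | 0 => by simp [auxU]
  | 1 => by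
      rw [show auxU 1 = MvPolynomial.X 1 from rfl]
      simp
  | (p + 2) => by
      rw [show auxU (p + 2) = MvPolynomial.X 1 * auxU (p + 1)
          + (MvPolynomial.C (2 * (p + 1) : ℚ) * (MvPolynomial.X 0) ^ 2) * auxU p from rfl]
      simp [psi_auxU p, psi_auxU (p + 1), pow_succ]
      ring

noncomputable def auxW (j k : ℕ) : MvPolynomial (Fin 2) ℚ :=
  ∑ m ∈ Finset.range (j + k + 1),
    MvPolynomial.C ((physHermite j * physHermite k).coeff m) *
      (MvPolynomial.C 2 * (MvPolynomial.X 0) ^ 2) ^ (j + k - m) * auxU m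

lemma auxW_ne_zero (j k : ℕ) : auxW j k ≠ 0 := by
  intro h
  have h2 := congrArg (MvPolynomial.aeval ![(0 : Polynomial ℚ), Polynomial.X]) h
  rw [auxW, map_sum, map_zero] at h2
  have h3 : ∀ m ∈ Finset.range (j + k + 1),
      (MvPolynomial.aeval ![(0 : Polynomial ℚ), Polynomial.X])
        (MvPolynomial.C ((physHermite j * physHermite k).coeff m) *
          (MvPolynomial.C 2 * (MvPolynomial.X 0) ^ 2) ^ (j + k - m) * auxU m) =
      if m = j + k then Polynomial.C ((physHermite j * physHermite k).coeff m) * Polynomial.X ^ m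
        else 0 := by
    intro m hm
    rw [map_mul, map_mul, map_pow, map_mul, map_pow, MvPolynomial.aeval_X,
      Matrix.cons_val_zero, psi_auxU m]
    by_cases hmjk : m = j + k
    · simp [hmjk, MvPolynomial.aeval_C, Polynomial.algebraMap_eq]
    · have : j + k - m ≠ 0 := by
        have := Finset.mem_range.mp hm
        omega
      simp [this, zero_pow, hmjk]
  rw [Finset.sum_congr rfl h3, Finset.sum_ite_eq' (Finset.range (j + k + 1)) (j + k)] at h2
  simp only [Finset.self_mem_range_succ, if_true] at h2
  have h4 : ((physHermite j * physHermite k).coeff (j + k)) ≠ 0 := by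
    rw [physHermite_mul_coeff_top]
    positivity
  exact (mul_ne_zero (Polynomial.C_ne_zero.mpr h4) (pow_ne_zero _ Polynomial.X_ne_zero)) h2

/-! ### The statement -/

/-- The `k`-th (physicists') Hermite polynomial `H_k(x) = (-1)^k e^{x²} (d/dx)^k e^{-x²}`. -/
noncomputable def hermitePoly (k : ℕ) (x : ℝ) : ℝ :=
  (-1) ^ k * Real.exp (x ^ 2) * iteratedDeriv k (fun y => Real.exp (-y ^ 2)) x

/-- The `k`-th Hermite function `φ_k(x) = (k! 2^k √π)^{-1/2} e^{-x²/2} H_k(x)`. -/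
noncomputable def hermiteFun (k : ℕ) (x : ℝ) : ℝ :=
  (Real.sqrt (k.factorial * 2 ^ k * Real.sqrt Real.pi))⁻¹ *
    Real.exp (-x ^ 2 / 2) * hermitePoly k x

lemma hermitePoly_eq (k : ℕ) (x : ℝ) : hermitePoly k x = aeval x (physHermite k) := by
  rw [hermitePoly, iteratedDeriv_gaussian]
  have h1 : (-1 : ℝ) ^ k * (-1 : ℝ) ^ k = 1 := by
    rw [← mul_pow]; norm_num
  have h2 : Real.exp (x ^ 2) * Real.exp (-x ^ 2) = 1 := by
    rw [← Real.exp_add]; simp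
  calc (-1 : ℝ) ^ k * Real.exp (x ^ 2) *
        ((-1 : ℝ) ^ k * (aeval x (physHermite k) * Real.exp (-x ^ 2)))
      = ((-1:ℝ)^k * (-1:ℝ)^k) * (Real.exp (x^2) * Real.exp (-x^2)) * aeval x (physHermite k) := by
        ring
    _ = aeval x (physHermite k) := by rw [h1, h2]; ring

/-- If `a < 0` and `√(1-a)` and `b` are algebraically independent over `ℚ`, then
`∫ e^{ax² + bx + c} φ_j φ_k ≠ 0` whenever `j ≡ k (mod 2)`. -/
theorem integral_gaussian_weighted_hermite_ne_zero
    (a b c : ℝ) (ha : a < 0)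
    (hab : AlgebraicIndependent ℚ ![Real.sqrt (1 - a), b])
    (j k : ℕ) (hjk : j % 2 = k % 2) :
    (∫ x : ℝ, Real.exp (a * x ^ 2 + b * x + c) * hermiteFun j x * hermiteFun k x) ≠ 0 := by
  have hα : 0 < 1 - a := by linarith
  set s : ℝ := Real.sqrt (1 - a) with hs_def
  have hs : s ^ 2 = 1 - a := Real.sq_sqrt hα.le
  set Cj : ℝ := (Real.sqrt (j.factorial * 2 ^ j * Real.sqrt Real.pi))⁻¹ with hCj_def
  set Ck : ℝ := (Real.sqrt (k.factorial * 2 ^ k * Real.sqrt Real.pi))⁻¹ with hCk_def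
  have hCj : 0 < Cj := by
    rw [hCj_def]
    have := Real.pi_pos
    positivity
  have hCk : 0 < Ck := by
    rw [hCk_def]
    have := Real.pi_pos
    positivity
  have hK : 0 < Cj * Ck * Real.exp c := by positivity
  -- rewrite the integrand
  have hint_eq : ∀ x : ℝ, Real.exp (a * x ^ 2 + b * x + c) * hermiteFun j x * hermiteFun k x =
      (Cj * Ck * Real.exp c) *
        ((aeval x) (physHermite j * physHermite k) * Real.exp (-(1 - a) * x ^ 2 + b * x)) := by
    intro x
    have hexp : Real.exp (a * x ^ 2 + b * x + c) * (Real.exp (-x ^ 2 / 2) * Real.exp (-x ^ 2 / 2))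
        = Real.exp c * Real.exp (-(1 - a) * x ^ 2 + b * x) := by
      rw [← Real.exp_add, ← Real.exp_add, ← Real.exp_add]
      congr 1
      ring
    rw [hermiteFun, hermiteFun, hermitePoly_eq, hermitePoly_eq, map_mul]
    calc Real.exp (a * x ^ 2 + b * x + c) * (Cj * Real.exp (-x ^ 2 / 2) * aeval x (physHermite j))
          * (Ck * Real.exp (-x ^ 2 / 2) * aeval x (physHermite k))
        = (Cj * Ck * (aeval x (physHermite j) * aeval x (physHermite k))) *
            (Real.exp (a * x ^ 2 + b * x + c) *
              (Real.exp (-x ^ 2 / 2) * Real.exp (-x ^ 2 / 2))) := by ring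
      _ = (Cj * Ck * Real.exp c) *
            ((aeval x (physHermite j) * aeval x (physHermite k)) *
              Real.exp (-(1 - a) * x ^ 2 + b * x)) := by rw [hexp]; ring
  simp only [hint_eq]
  rw [integral_const_mul]
  apply mul_ne_zero (ne_of_gt hK)
  -- expand the polynomial
  have hdeg : (physHermite j * physHermite k).natDegree < j + k + 1 :=
    lt_of_le_of_lt (natDegree_mul_le.trans
      (add_le_add (physHermite_natDegree_le j) (physHermite_natDegree_le k))) (lt_add_one _)
  have hexpand : ∀ x : ℝ,
      (aeval x) (physHermite j * physHermite k) * Real.exp (-(1 - a) * x ^ 2 + b * x) =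
      ∑ m ∈ Finset.range (j + k + 1),
        ((physHermite j * physHermite k).coeff m : ℝ) *
          (x ^ m * Real.exp (-(1 - a) * x ^ 2 + b * x)) := by
    intro x
    rw [Polynomial.aeval_eq_sum_range' hdeg, Finset.sum_mul]
    refine Finset.sum_congr rfl fun m _ => ?_
    rw [Rat.smul_def]
    ring
  simp only [hexpand]
  rw [integral_finset_sum _ (fun m _ => ((integrable_pow_mul_gauss hα b m).const_mul _))]
  simp only [integral_const_mul]
  -- the key algebraic identity
  have key : (2 * (1 - a)) ^ (j + k) *
      (∑ m ∈ Finset.range (j + k + 1), ((physHermite j * physHermite k).coeff m : ℝ) *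
        ∫ x : ℝ, x ^ m * Real.exp (-(1 - a) * x ^ 2 + b * x)) =
      (∫ x : ℝ, x ^ 0 * Real.exp (-(1 - a) * x ^ 2 + b * x)) *
        (MvPolynomial.aeval ![s, b]) (auxW j k) := by
    rw [Finset.mul_sum, auxW, map_sum, Finset.mul_sum]
    refine Finset.sum_congr rfl fun m hm => ?_
    have hm' : m ≤ j + k := Nat.lt_succ_iff.mp (Finset.mem_range.mp hm)
    have hpow : (2 * (1 - a) : ℝ) ^ (j + k)
        = (2 * (1 - a)) ^ (j + k - m) * (2 * (1 - a)) ^ m := by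
      rw [← pow_add, Nat.sub_add_cancel hm']
    have hmf := moment_formula hα b s hs m
    rw [map_mul, map_mul, map_pow, map_mul, map_pow, MvPolynomial.aeval_X,
      Matrix.cons_val_zero, MvPolynomial.aeval_C, MvPolynomial.aeval_C,
      eq_ratCast (algebraMap ℚ ℝ), eq_ratCast (algebraMap ℚ ℝ), hs]
    push_cast
    calc (2 * (1 - a)) ^ (j + k) * (((physHermite j * physHermite k).coeff m : ℝ) *
          ∫ x : ℝ, x ^ m * Real.exp (-(1 - a) * x ^ 2 + b * x))
        = ((physHermite j * physHermite k).coeff m : ℝ) * (2 * (1 - a)) ^ (j + k - m) *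
            ((2 * (1 - a)) ^ m * ∫ x : ℝ, x ^ m * Real.exp (-(1 - a) * x ^ 2 + b * x)) := by
          rw [hpow]; ring
      _ = _ := by rw [hmf]; ring
  -- conclude
  have hW : (MvPolynomial.aeval ![s, b]) (auxW j k) ≠ 0 := by
    intro h
    exact auxW_ne_zero j k (hab (show (MvPolynomial.aeval ![s, b]) (auxW j k)
      = (MvPolynomial.aeval ![s, b]) 0 by rw [h, map_zero]))
  intro hzero
  rw [hzero, mul_zero] at key
  exact (mul_ne_zero (ne_of_gt (integral_exp_gauss_pos hα b)) hW) key.symm
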